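/- For i ∈ {1,2} let X_i be a Cantor space and let G_i be a group of homeomorphisms of X_i of class F. Let α : G₁ → G₂ be a group isomorphism, and for x ∈ X₁ set T(x) := {g ∈ G₁ : x ∈ supp(g) and g² = 1} and P(x) := ⋂_{g ∈ T(x)} supp(α(g)). Then P(x) is a singleton for every x ∈ X₁, and the map h : X₁ → X₂ sending each x to the unique point of P(x) is a homeomorphism satisfying α(g) = h ∘ g ∘ h⁻¹ for all g ∈ G₁. -/

import Mathlib

instance homeoGroup {X : Type*} [TopologicalSpace X] : Group (X ≃ₜ X) where
  mul a b := b.trans a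
  one := Homeomorph.refl X
  inv := Homeomorph.symm
  mul_assoc a b c := rfl
  one_mul a := Homeomorph.ext fun _ => rfl
  mul_one a := Homeomorph.ext fun _ => rfl
  inv_mul_cancel a := Homeomorph.ext fun x => a.symm_apply_apply x

@[simp] lemma homeo_mul_apply {X : Type*} [TopologicalSpace X] (f g : X ≃ₜ X) (x : X) :
    (f * g) x = f (g x) := rfl

@[simp] lemma homeo_one_apply {X : Type*} [TopologicalSpace X] (x : X) :
    (1 : X ≃ₜ X) x = x := rfl


lemma homeo_zpow_add_apply {X : Type*} [TopologicalSpace X] (φ : X ≃ₜ X) (a b : ℤ) (x : X) :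
    (φ ^ (a + b)) x = (φ ^ a) ((φ ^ b) x) := by
  rw [zpow_add]; rfl

/-- A *Cantor space* is a topological space homeomorphic to `{0,1}^ℕ`. -/
def IsCantorSpace (X : Type*) [TopologicalSpace X] : Prop :=
  Nonempty (X ≃ₜ (ℕ → Bool))

/-- A homeomorphism is *minimal* if every `ℤ`-orbit `{φ^n x : n ∈ ℤ}` is dense. -/
def IsMinimalHomeo {X : Type*} [TopologicalSpace X] (φ : X ≃ₜ X) : Prop :=
  ∀ x : X, Dense (Set.range fun n : ℤ => (φ ^ n) x)

/-- The support of a homeomorphism: the closure of the set of non-fixed points. -/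
def homeoSupp {X : Type*} [TopologicalSpace X] (g : X ≃ₜ X) : Set X :=
  closure {x | g x ≠ x}


/-- A group of homeomorphisms of a Cantor space is of *class F* (Matui). -/
def IsClassF {X : Type*} [TopologicalSpace X] (G : Subgroup (X ≃ₜ X)) : Prop :=
  (∀ g ∈ G, g * g = 1 → IsClopen (homeoSupp g)) ∧
  (∀ U : Set X, IsClopen U → ∀ x ∈ U,
      ∃ g ∈ G, g ≠ 1 ∧ g * g = 1 ∧ x ∈ homeoSupp g ∧ homeoSupp g ⊆ U) ∧
  (∀ g ∈ G, g ≠ 1 → g * g = 1 → ∀ U : Set X, U.Nonempty → IsClopen U → U ⊆ homeoSupp g →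
      ∃ g' ∈ G, g' ≠ 1 ∧ homeoSupp g' ⊆ U ∪ ⇑g '' U ∧ ∀ x ∈ homeoSupp g', g x = g' x) ∧
  (∀ U : Set X, U.Nonempty → IsClopen U → ∃ g ∈ G, homeoSupp g ⊆ U ∧ g * g ≠ 1)

namespace CFP
open Set

variable {X : Type*} [TopologicalSpace X]

@[simp] lemma homeo_inv_apply (g : X ≃ₜ X) (x : X) : (g⁻¹ : X ≃ₜ X) x = g.symm x := rfl

lemma invol_apply {σ : X ≃ₜ X} (h : σ * σ = 1) (y : X) : σ (σ y) = y := by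
  have : (σ * σ) y = (1 : X ≃ₜ X) y := by rw [h]
  simpa using this

lemma mem_supp_of_moved {g : X ≃ₜ X} {x : X} (h : g x ≠ x) : x ∈ homeoSupp g :=
  subset_closure h

lemma fix_of_not_mem_supp {g : X ≃ₜ X} {x : X} (h : x ∉ homeoSupp g) : g x = x := by
  by_contra hc; exact h (mem_supp_of_moved hc)

lemma moved_moved {g : X ≃ₜ X} {x : X} (h : g x ≠ x) : g (g x) ≠ g x :=
  fun hc => h (g.injective hc)

lemma exists_moved {g : X ≃ₜ X} (h : g ≠ 1) : ∃ x, g x ≠ x := by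
  by_contra hc
  push_neg at hc
  exact h (Homeomorph.ext fun x => by simpa using hc x)

lemma eq_one_of_not_moved {g : X ≃ₜ X} (h : ∀ x, g x = x) : g = 1 :=
  Homeomorph.ext fun x => by simpa using h x

lemma supp_nonempty_of_ne_one {g : X ≃ₜ X} (h : g ≠ 1) : (homeoSupp g).Nonempty := by
  obtain ⟨x, hx⟩ := exists_moved h
  exact ⟨x, mem_supp_of_moved hx⟩

lemma moved_inv {g : X ≃ₜ X} {x : X} (h : g.symm x ≠ x) : g x ≠ x := by
  intro hc
  apply h
  nth_rewrite 1 [← hc]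
  rw [g.symm_apply_apply]

lemma moved_inv' {g : X ≃ₜ X} {x : X} (h : g x ≠ x) : g.symm x ≠ x := by
  intro hc
  apply h
  nth_rewrite 1 [← hc]
  rw [g.apply_symm_apply]

lemma moved_mul {a b : X ≃ₜ X} {x : X} (h : (a * b) x ≠ x) : a x ≠ x ∨ b x ≠ x := by
  by_contra hc
  push_neg at hc
  exact h (by simp [hc.1, hc.2])

/-- `supp (f * g * f⁻¹) = f '' supp g`. -/
lemma supp_conj (f g : X ≃ₜ X) : homeoSupp (f * g * f⁻¹) = f '' homeoSupp g := by
  have hset : {x | (f * g * f⁻¹) x ≠ x} = f '' {x | g x ≠ x} := by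
    ext y
    simp only [mem_setOf_eq, homeo_mul_apply, homeo_inv_apply, mem_image]
    constructor
    · intro hy
      refine ⟨f.symm y, fun hc => hy ?_, f.apply_symm_apply y⟩
      rw [hc, f.apply_symm_apply]
    · rintro ⟨x, hx, rfl⟩
      rw [f.symm_apply_apply]
      exact fun hc => hx (f.injective hc)
  rw [homeoSupp, hset, ← f.image_closure]
  rfl

lemma commute_of_moved_disjoint {f g : X ≃ₜ X} (h : ∀ x, ¬(f x ≠ x ∧ g x ≠ x)) :
    f * g = g * f := by
  apply Homeomorph.ext
  intro x
  simp only [homeo_mul_apply]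
  by_cases hg : g x = x
  · by_cases hf : f x = x
    · rw [hg, hf, hg]
    · have hgf : g (f x) = f x := by
        by_contra hc
        exact h (f x) ⟨moved_moved hf, hc⟩
      rw [hg, hgf]
  · have hf : f x = x := by
      by_contra hc
      exact h x ⟨hc, hg⟩
    have hfg : f (g x) = g x := by
      by_contra hc
      exact h (g x) ⟨hc, moved_moved hg⟩
    rw [hfg, hf]

lemma mul_ne_one_of_disjoint {u g : X ≃ₜ X} {S : Set X}
    (hu : ∀ x, u x ≠ x → x ∉ S) (hg : ∀ x, g x ≠ x → x ∈ S) (hg1 : g ≠ 1) :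
    u * g ≠ 1 := by
  obtain ⟨x, hx⟩ := exists_moved hg1
  intro hc
  have h1 : (u * g) x = x := by rw [hc]; simp
  have h2 : g x ∈ S := hg _ (moved_moved hx)
  have h3 : u (g x) = g x := by
    by_contra hmoved
    exact hu _ hmoved h2
  simp only [homeo_mul_apply] at h1
  rw [h3] at h1
  exact hx h1

end CFP
namespace CFP
open Set

section GroupAlgebra
variable {Gp : Type*} [Group Gp]

lemma inv_eq_self {s : Gp} (hs : s * s = 1) : s⁻¹ = s :=
  inv_eq_of_mul_eq_one_right hs

lemma conj_mul_conj {a x y : Gp} (ha : a * a = 1) :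
    a * (x * y) * a = (a * x * a) * (a * y * a) := by
  have : (a * x * a) * (a * y * a) = a * x * (a * a) * y * a := by group
  rw [this, ha]
  group

/-- `s * d * s = d⁻¹` for `d = q * (s * q⁻¹ * s)`. -/
lemma sds {s q : Gp} (hs : s * s = 1) :
    s * (q * (s * q⁻¹ * s)) * s = (q * (s * q⁻¹ * s))⁻¹ := by
  have h1 : s⁻¹ = s := inv_eq_self hs
  have : s * (q * (s * q⁻¹ * s)) * s = s * q * s * q⁻¹ * (s * s) := by group
  rw [this, hs, mul_one]
  rw [mul_inv_rev, mul_inv_rev, mul_inv_rev, h1, inv_inv]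
  group

lemma sds_conv {s f : Gp} (h : s * f * s = f⁻¹) : (s * f) * (s * f) = 1 := by
  have : (s * f) * (s * f) = (s * f * s) * f := by group
  rw [this, h, inv_mul_cancel]

lemma pow4_expand (x : Gp) : x ^ 4 = x * x * x * x := by
  rw [show (4:ℕ) = 3 + 1 by norm_num, pow_succ, show (3:ℕ) = 2 + 1 by norm_num, pow_succ,
    sq]

lemma mul4_of_commute {a b : Gp} (h : a * b = b * a) :
    (a * b) * (a * b) * (a * b) * (a * b) = (a * a * a * a) * (b * b * b * b) := by
  have hc : Commute a b := h
  have := hc.mul_pow 4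
  rw [pow4_expand, pow4_expand, pow4_expand] at this
  exact this

end GroupAlgebra

section Soundness
variable {X : Type*} [TopologicalSpace X]

lemma chase_aux {σ τ f : X ≃ₜ X} (hσ : σ * σ = 1) (hτ : τ * τ = 1)
    (hdisj : ∀ x, σ x = x ∨ τ x = x)
    (hσf : ∀ y, σ (f (σ y)) = f.symm y) (hτf : ∀ y, τ (f (τ y)) = f.symm y)
    {x : X} (hx : f (f x) ≠ x) (hσx : σ x ≠ x) : f (f (f (f x))) = x := by
  have hτx : τ x = x := (hdisj x).resolve_left hσx
  -- τ (f x) = f.symm x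
  have h1 : τ (f x) = f.symm x := by have := hτf x; rwa [hτx] at this
  have h2 : f.symm x ≠ f x := by
    intro he
    apply hx
    have : f (f.symm x) = f (f x) := by rw [he]
    rw [f.apply_symm_apply] at this
    exact this.symm
  have hτfx : τ (f x) ≠ f x := by rw [h1]; exact h2
  have hσfx : σ (f x) = f x := (hdisj (f x)).resolve_right hτfx
  -- σ (f (f x)) = x
  have h3 : σ (f (f x)) = x := by
    have := hσf (f x)
    rw [hσfx, f.symm_apply_apply] at this
    exact this
  have h4 : σ x = f (f x) := by
    have := congrArg σ h3
    rw [invol_apply hσ] at this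
    rw [← this]
  -- σ (f³ x) = f.symm x
  have h5 : σ (f (f (f x))) = f.symm x := by
    have := hσf x
    rwa [h4] at this
  by_cases hc : f (f (f x)) = f.symm x
  · have := congrArg f hc
    rwa [f.apply_symm_apply] at this
  · exfalso
    have h6 : σ (f.symm x) = f (f (f x)) := by
      have := congrArg σ h5
      rw [invol_apply hσ] at this
      exact this.symm
    have h7 : σ (f.symm x) ≠ f.symm x := by rw [h6]; exact hc
    have h8 : τ (f.symm x) = f.symm x := (hdisj (f.symm x)).resolve_left h7
    have h9 := hτf (f.symm x)
    rw [h8, f.apply_symm_apply, hτx] at h9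
    -- h9 : x = f.symm (f.symm x)
    apply hx
    have := congrArg (fun z => f (f z)) h9
    rw [f.apply_symm_apply, f.apply_symm_apply] at this
    exact this

lemma pow4_eq_one_of_disjoint {σ τ f : X ≃ₜ X} (hσ : σ * σ = 1) (hτ : τ * τ = 1)
    (hdisj : ∀ x, σ x = x ∨ τ x = x)
    (h1 : (σ * f) * (σ * f) = 1) (h2 : (τ * f) * (τ * f) = 1) :
    f * f * f * f = 1 := by
  have hσf : ∀ y, σ (f (σ y)) = f.symm y := by
    intro y
    have e1 : σ (f (σ (f (f.symm y)))) = f.symm y := by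
      have := invol_apply h1 (f.symm y)
      simpa using this
    rwa [f.apply_symm_apply] at e1
  have hτf : ∀ y, τ (f (τ y)) = f.symm y := by
    intro y
    have e1 : τ (f (τ (f (f.symm y)))) = f.symm y := by
      have := invol_apply h2 (f.symm y)
      simpa using this
    rwa [f.apply_symm_apply] at e1
  apply Homeomorph.ext
  intro x
  simp only [homeo_mul_apply, homeo_one_apply]
  by_cases hx : f (f x) = x
  · rw [hx, hx]
  · -- x is moved by σ or τ
    have hmoved : σ x ≠ x ∨ τ x ≠ x := by
      by_contra hc
      push_neg at hc
      obtain ⟨hcσ, hcτ⟩ := hc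
      have e1 : σ (f x) = f.symm x := by have := hσf x; rwa [hcσ] at this
      have e2 : τ (f x) = f.symm x := by have := hτf x; rwa [hcτ] at this
      have h2' : f.symm x ≠ f x := by
        intro he
        apply hx
        have : f (f.symm x) = f (f x) := by rw [he]
        rw [f.apply_symm_apply] at this
        exact this.symm
      rcases hdisj (f x) with h | h
      · rw [e1] at h; exact h2' h
      · rw [e2] at h; exact h2' h
    rcases hmoved with h | h
    · exact chase_aux hσ hτ hdisj hσf hτf hx h
    · exact chase_aux hτ hσ (fun y => (hdisj y).symm) hτf hσf hx h

end Soundness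
end CFP
namespace CFP
open Set

section MoreAlgebra
variable {Gp : Type*} [Group Gp]

lemma conj_conj_comm {s r x : Gp} (hc : s * r = r * s) :
    r * (s * x * s) * r = s * (r * x * r) * s := by
  have h1 : r * (s * x * s) * r = (r * s) * x * (s * r) := by group
  have h2 : s * (r * x * r) * s = (s * r) * x * (r * s) := by group
  rw [h1, h2, ← hc]

lemma conj_cancel {s x : Gp} (hs : s * s = 1) : s * (s * x * s) * s = x := by
  have h : s * (s * x * s) * s = (s * s) * x * (s * s) := by group
  rw [h, hs, one_mul, mul_one]

lemma conj_inv_invol {r q : Gp} (hr : r * r = 1) : r * q⁻¹ * r = (r * q * r)⁻¹ := by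
  have hrinv : r⁻¹ = r := inv_eq_self hr
  rw [mul_inv_rev, mul_inv_rev, hrinv]
  group

lemma D_inv {s q : Gp} (hs : s * s = 1) : (q * (s * q⁻¹ * s))⁻¹ = (s * q * s) * q⁻¹ := by
  have hsinv : s⁻¹ = s := inv_eq_self hs
  rw [mul_inv_rev, mul_inv_rev, mul_inv_rev, inv_inv, hsinv]
  group

end MoreAlgebra

section Construction
variable {X : Type*} [TopologicalSpace X]

lemma moved_conj {s q : X ≃ₜ X} (hs : s * s = 1) {y : X} (h : (s * q * s) y ≠ y) :
    q (s y) ≠ s y := by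
  intro hc
  apply h
  show s (q (s y)) = y
  rw [hc, invol_apply hs]

lemma moved2 {x : X ≃ₜ X} {y : X} (h : (x * x) y ≠ y) : x y ≠ y := by
  intro hc; apply h; simp [hc]

lemma moved4 {x : X ≃ₜ X} {y : X} (h : (x * x * x * x) y ≠ y) : x y ≠ y := by
  intro hc; apply h; simp [hc]

lemma moved_D {s q : X ≃ₜ X} (hs : s * s = 1) {A : Set X} (hq : ∀ y, q y ≠ y → y ∈ A) :
    ∀ y, (q * (s * q⁻¹ * s)) y ≠ y → y ∈ A ∪ ⇑s '' A := by
  intro y hy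
  rcases moved_mul hy with h | h
  · exact Or.inl (hq y h)
  · have h2 : (q⁻¹ : X ≃ₜ X) (s y) ≠ s y := moved_conj hs h
    have h3 : q (s y) ≠ s y := moved_inv h2
    exact Or.inr ⟨s y, hq _ h3, invol_apply hs y⟩

lemma D4_ne_one {s q : X ≃ₜ X} (hs : s * s = 1) {A : Set X}
    (hq : ∀ y, q y ≠ y → y ∈ A) (hdis : ∀ y ∈ A, s y ∉ A)
    (h4 : q * q * q * q ≠ 1) :
    (q * (s * q⁻¹ * s)) * (q * (s * q⁻¹ * s)) * (q * (s * q⁻¹ * s)) * (q * (s * q⁻¹ * s)) ≠ 1 := by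
  set u := s * q⁻¹ * s with hu
  have hmu : ∀ y, u y ≠ y → y ∈ s '' A := by
    intro y hy
    have h3 : q (s y) ≠ s y := moved_inv (moved_conj hs hy)
    exact ⟨s y, hq _ h3, invol_apply hs y⟩
  have hAnotin : ∀ y, y ∈ s '' A → y ∉ A := by
    rintro y ⟨a, ha, rfl⟩
    exact hdis a ha
  have hcomm : q * u = u * q := by
    apply commute_of_moved_disjoint
    rintro y ⟨h1, h2⟩
    exact hAnotin y (hmu y h2) (hq y h1)
  have hswap : (q * u) * (q * u) * (q * u) * (q * u) = (u * u * u * u) * (q * q * q * q) := by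
    rw [hcomm]
    exact mul4_of_commute hcomm.symm
  rw [hswap]
  apply mul_ne_one_of_disjoint (S := A)
  · intro y hy
    exact hAnotin y (hmu y (moved4 hy))
  · intro y hy
    exact hq y (moved4 hy)
  · exact h4

/-- local agreement of two involutions transports conjugation. -/
lemma conj_eq_conj {σ τ h : X ≃ₜ X} (hσ2 : σ * σ = 1) (hτ2 : τ * τ = 1) {V : Set X}
    (hmoved : ∀ y, h y ≠ y → y ∈ V) (hagree : ∀ v ∈ V, σ v = τ v) :
    τ * h * τ = σ * h * σ := by
  apply Homeomorph.ext
  intro y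
  show τ (h (τ y)) = σ (h (σ y))
  by_cases hy : τ y ∈ V
  · have hσy : σ y = τ y := by
      have e1 : σ (τ y) = τ (τ y) := hagree _ hy
      rw [invol_apply hτ2] at e1
      have e2 := congrArg σ e1
      rw [invol_apply hσ2] at e2
      exact e2.symm
    rw [hσy]
    have hhin : h (τ y) ∈ V := by
      by_cases hm : h (τ y) = τ y
      · rw [hm]; exact hy
      · exact hmoved _ (moved_moved hm)
    rw [hagree _ hhin]
  · have e1 : h (τ y) = τ y := by
      by_contra hc; exact hy (hmoved _ hc)
    rw [e1, invol_apply hτ2]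
    have hσy : σ y ∉ V := by
      intro hin
      have e2 : σ (σ y) = τ (σ y) := hagree _ hin
      rw [invol_apply hσ2] at e2
      have e3 := congrArg τ e2
      rw [invol_apply hτ2] at e3
      exact hy (e3 ▸ hin)
    have e4 : h (σ y) = σ y := by
      by_contra hc; exact hσy (hmoved _ hc)
    rw [e4, invol_apply hσ2]

variable {G : Subgroup (X ≃ₜ X)}

/-- In any nonempty clopen set there is an element of `G` supported inside whose 4th power is
nontrivial. -/
lemma exists_pow4_supported
    (hF2 : ∀ U : Set X, IsClopen U → ∀ x ∈ U,
      ∃ g ∈ G, g ≠ 1 ∧ g * g = 1 ∧ x ∈ homeoSupp g ∧ homeoSupp g ⊆ U)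
    (hF4 : ∀ U : Set X, U.Nonempty → IsClopen U → ∃ g ∈ G, homeoSupp g ⊆ U ∧ g * g ≠ 1)
    (sep : ∀ x y : X, x ≠ y → ∃ B : Set X, IsClopen B ∧ x ∈ B ∧ y ∉ B)
    {V : Set X} (hV : IsClopen V) (hne : V.Nonempty) :
    ∃ h ∈ G, (∀ x, h x ≠ x → x ∈ V) ∧ h * h * h * h ≠ 1 := by
  obtain ⟨x, hx⟩ := hne
  obtain ⟨c, hcG, hc1, hcinv, hxc, hcV⟩ := hF2 V hV x hx
  obtain ⟨w, hw⟩ := exists_moved hc1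
  obtain ⟨B, hB, hwB, hcwB⟩ := sep w (c w) (Ne.symm hw)
  set W := (B ∩ V) ∩ (⇑c ⁻¹' Bᶜ) with hWdef
  have hWclopen : IsClopen W := (hB.inter hV).inter ((hB.compl).preimage c.continuous)
  have hwW : w ∈ W := ⟨⟨hwB, hcV (mem_supp_of_moved hw)⟩, hcwB⟩
  have hkey : ∀ y ∈ W, c y ∉ W := by
    rintro y ⟨⟨_, _⟩, hyc⟩ hmem
    exact hyc hmem.1.1
  obtain ⟨g₀, hg₀G, hg₀W, hg₀2⟩ := hF4 W ⟨w, hwW⟩ hWclopen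
  have hmove₀ : ∀ y, g₀ y ≠ y → y ∈ W := fun y hy => hg₀W (mem_supp_of_moved hy)
  refine ⟨c * g₀, mul_mem hcG hg₀G, ?_, ?_⟩
  · intro y hy
    rcases moved_mul hy with h | h
    · exact hcV (mem_supp_of_moved h)
    · exact (hmove₀ y h).1.2
  · set u := c * g₀ * c with hu
    have hmu : ∀ y, u y ≠ y → y ∈ ⇑c '' W := by
      intro y hy
      exact ⟨c y, hmove₀ _ (moved_conj hcinv hy), invol_apply hcinv y⟩
    have hnotW : ∀ y, y ∈ ⇑c '' W → y ∉ W := by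
      rintro y ⟨a, ha, rfl⟩
      exact hkey a ha
    have hcomm : u * g₀ = g₀ * u := by
      apply commute_of_moved_disjoint
      rintro y ⟨h1, h2⟩
      exact hnotW y (hmu y h1) (hmove₀ y h2)
    have hexp : (c * g₀) * (c * g₀) * (c * g₀) * (c * g₀) = (u * u) * (g₀ * g₀) := by
      have e1 : (c * g₀) * (c * g₀) * (c * g₀) * (c * g₀) = (u * g₀) * (u * g₀) := by
        rw [hu]; group
      rw [e1]
      have e2 : (u * g₀) * (u * g₀) = u * (g₀ * u) * g₀ := by group
      rw [e2, ← hcomm]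
      group
    rw [hexp]
    apply mul_ne_one_of_disjoint (S := W)
    · intro y hy
      exact hnotW y (hmu y (moved2 hy))
    · intro y hy
      exact hmove₀ y (moved2 hy)
    · exact hg₀2

lemma moved_isOpen (sep : ∀ x y : X, x ≠ y → ∃ B : Set X, IsClopen B ∧ x ∈ B ∧ y ∉ B)
    (g : X ≃ₜ X) : IsOpen {x | g x ≠ x} := by
  rw [isOpen_iff_forall_mem_open]
  intro x hx
  obtain ⟨B, hB, hgx, hxB⟩ := sep (g x) x hx
  refine ⟨(⇑g ⁻¹' B) ∩ Bᶜ, ?_, (hB.preimage g.continuous).isOpen.inter hB.compl.isOpen, ?_⟩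
  · rintro y ⟨h1, h2⟩
    intro hc
    rw [mem_preimage, hc] at h1
    exact h2 h1
  · exact ⟨hgx, hxB⟩

/-- Completeness: overlapping commuting involutions admit an algebraic witness. -/
lemma exists_alg_witness
    (hF1 : ∀ g ∈ G, g * g = 1 → IsClopen (homeoSupp g))
    (hF2 : ∀ U : Set X, IsClopen U → ∀ x ∈ U,
      ∃ g ∈ G, g ≠ 1 ∧ g * g = 1 ∧ x ∈ homeoSupp g ∧ homeoSupp g ⊆ U)
    (hF4 : ∀ U : Set X, U.Nonempty → IsClopen U → ∃ g ∈ G, homeoSupp g ⊆ U ∧ g * g ≠ 1)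
    (sep : ∀ x y : X, x ≠ y → ∃ B : Set X, IsClopen B ∧ x ∈ B ∧ y ∉ B)
    (basis : ∀ (x : X) (U : Set X), IsOpen U → x ∈ U → ∃ V, IsClopen V ∧ x ∈ V ∧ V ⊆ U)
    {σ τ : X ≃ₜ X} (hσG : σ ∈ G) (hτG : τ ∈ G) (hσ2 : σ * σ = 1) (hτ2 : τ * τ = 1)
    (hcomm : σ * τ = τ * σ)
    (hover : (homeoSupp σ ∩ homeoSupp τ).Nonempty) :
    ∃ f ∈ G, (σ * f) * (σ * f) = 1 ∧ (τ * f) * (τ * f) = 1 ∧ f * f * f * f ≠ 1 := by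
  classical
  set W := homeoSupp σ ∩ homeoSupp τ with hWdef
  have hWclopen : IsClopen W := (hF1 σ hσG hσ2).inter (hF1 τ hτG hτ2)
  -- find a point of W moved by both σ and τ
  obtain ⟨w₀, hw₀⟩ := hover
  have h₁ : (W ∩ {x | σ x ≠ x}).Nonempty := by
    have hw : w₀ ∈ closure {x | σ x ≠ x} := hw₀.1
    rw [mem_closure_iff] at hw
    exact hw W hWclopen.isOpen hw₀
  obtain ⟨z₁, hz₁⟩ := h₁
  have hO₁ : IsOpen (W ∩ {x | σ x ≠ x}) := hWclopen.isOpen.inter (moved_isOpen sep σ)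
  have h₂ : ((W ∩ {x | σ x ≠ x}) ∩ {x | τ x ≠ x}).Nonempty := by
    have hz : z₁ ∈ closure {x | τ x ≠ x} := hz₁.1.2
    rw [mem_closure_iff] at hz
    exact hz _ hO₁ hz₁
  obtain ⟨z₀, ⟨⟨hz₀W, hz₀σ⟩, hz₀τ⟩⟩ := h₂
  by_cases hcase : ∃ z, z ∈ W ∧ σ z ≠ z ∧ τ z ≠ z ∧ σ z ≠ τ z
  · -- Case (i): a free Klein spot
    obtain ⟨z, hzW, hσz, hτz, hστ⟩ := hcase
    have hpt : σ (τ z) = τ (σ z) := by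
      have : (σ * τ) z = (τ * σ) z := by rw [hcomm]
      simpa using this
    have hne01 : z ≠ σ z := Ne.symm hσz
    have hne02 : z ≠ τ z := Ne.symm hτz
    have hne03 : z ≠ σ (τ z) := by
      intro he
      apply hστ
      have := congrArg σ he
      rw [invol_apply hσ2] at this
      rw [← this]
    have hne12 : σ z ≠ τ z := hστ
    have hne13 : σ z ≠ σ (τ z) := fun he => hne02 (σ.injective he)
    have hne23 : τ z ≠ σ (τ z) := by
      intro he
      rw [hpt] at he
      exact hσz (τ.injective he).symm
    obtain ⟨B1, hB1, hB1z, hB1σ⟩ := sep z (σ z) hne01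
    obtain ⟨B2, hB2, hB2z, hB2τ⟩ := sep z (τ z) hne02
    obtain ⟨B3, hB3, hB3z, hB3στ⟩ := sep z (σ (τ z)) hne03
    obtain ⟨C1, hC1, hC1σ, hC1τ⟩ := sep (σ z) (τ z) hne12
    obtain ⟨C2, hC2, hC2σ, hC2στ⟩ := sep (σ z) (σ (τ z)) hne13
    obtain ⟨C3, hC3, hC3τ, hC3στ⟩ := sep (τ z) (σ (τ z)) hne23
    set N₀ := (B1 ∩ B2) ∩ B3 with hN₀
    set N₁ := (B1ᶜ ∩ C1) ∩ C2 with hN₁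
    set N₂ := (B2ᶜ ∩ C1ᶜ) ∩ C3 with hN₂
    set N₃ := (B3ᶜ ∩ C2ᶜ) ∩ C3ᶜ with hN₃
    set V := ((N₀ ∩ (⇑σ ⁻¹' N₁)) ∩ (⇑τ ⁻¹' N₂)) ∩ (⇑(σ * τ) ⁻¹' N₃) with hVdef
    have hVclopen : IsClopen V :=
      (((((hB1.inter hB2).inter hB3).inter
        (((hB1.compl.inter hC1).inter hC2).preimage σ.continuous)).inter
        (((hB2.compl.inter hC1.compl).inter hC3).preimage τ.continuous)).inter
        (((hB3.compl.inter hC2.compl).inter hC3.compl).preimage (σ * τ).continuous))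
    have hzV : z ∈ V := by
      refine ⟨⟨⟨⟨⟨hB1z, hB2z⟩, hB3z⟩, ?_⟩, ?_⟩, ?_⟩
      · exact ⟨⟨hB1σ, hC1σ⟩, hC2σ⟩
      · exact ⟨⟨hB2τ, hC1τ⟩, hC3τ⟩
      · show (σ * τ) z ∈ N₃
        have : (σ * τ) z = σ (τ z) := rfl
        rw [this]
        exact ⟨⟨hB3στ, hC2στ⟩, hC3στ⟩
    -- images of V
    have hV0 : ∀ y ∈ V, y ∈ N₀ := fun y hy => hy.1.1.1
    have hV1 : ∀ y ∈ V, σ y ∈ N₁ := fun y hy => hy.1.1.2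
    have hV2 : ∀ y ∈ V, τ y ∈ N₂ := fun y hy => hy.1.2
    have hV3 : ∀ y ∈ V, σ (τ y) ∈ N₃ := fun y hy => hy.2
    obtain ⟨h, hhG, hmovedh, hh4⟩ := exists_pow4_supported hF2 hF4 sep hVclopen ⟨z, hzV⟩
    set p := h * (τ * h⁻¹ * τ) with hpdef
    set Q := V ∪ ⇑τ '' V with hQdef
    have hmovedp : ∀ y, p y ≠ y → y ∈ Q := moved_D hτ2 hmovedh
    have hdisVτ : ∀ y ∈ V, τ y ∉ V := by
      intro y hy hyτ
      exact (hV2 y hy).1.1 (hV0 _ hyτ).1.2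
    have hp4 : p * p * p * p ≠ 1 := D4_ne_one hτ2 hmovedh hdisVτ hh4
    have hτpτ : τ * p * τ = p⁻¹ := sds hτ2
    have hQmem : ∀ y ∈ Q, y ∈ N₀ ∪ N₂ := by
      rintro y (hy | ⟨v, hv, rfl⟩)
      · exact Or.inl (hV0 y hy)
      · exact Or.inr (hV2 v hv)
    have hσQmem : ∀ y ∈ Q, σ y ∈ N₁ ∪ N₃ := by
      rintro y (hy | ⟨v, hv, rfl⟩)
      · exact Or.inl (hV1 y hy)
      · exact Or.inr (hV3 v hv)
    have hdisQσ : ∀ y ∈ Q, σ y ∉ Q := by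
      intro y hy hyσ
      rcases hQmem _ hyσ with h0 | h2
      · rcases hσQmem y hy with h1 | h3
        · exact h1.1.1 h0.1.1
        · exact h3.1.1 h0.2
      · rcases hσQmem y hy with h1 | h3
        · exact h2.1.2 h1.1.2
        · exact h3.2 h2.2
    have hf4 := D4_ne_one hσ2 hmovedp hdisQσ hp4
    have hcommPQ : p⁻¹ * (σ * p * σ) = (σ * p * σ) * p⁻¹ := by
      apply commute_of_moved_disjoint
      rintro y ⟨h1, h2⟩
      have hy1 : p y ≠ y := moved_inv h1
      have hy2 : p (σ y) ≠ σ y := moved_conj hσ2 h2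
      have hyQ : y ∈ Q := hmovedp y hy1
      have hyσQ : σ y ∈ Q := hmovedp _ hy2
      have hnot : σ (σ y) ∉ Q := hdisQσ _ hyσQ
      rw [invol_apply hσ2] at hnot
      exact hnot hyQ
    have hτfτ : τ * (p * (σ * p⁻¹ * σ)) * τ = (p * (σ * p⁻¹ * σ))⁻¹ := by
      calc τ * (p * (σ * p⁻¹ * σ)) * τ
          = (τ * p * τ) * (τ * (σ * p⁻¹ * σ) * τ) := conj_mul_conj hτ2
        _ = p⁻¹ * (σ * (τ * p⁻¹ * τ) * σ) := by rw [hτpτ, conj_conj_comm hcomm]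
        _ = p⁻¹ * (σ * p * σ) := by rw [conj_inv_invol hτ2, hτpτ, inv_inv]
        _ = (σ * p * σ) * p⁻¹ := hcommPQ
        _ = (p * (σ * p⁻¹ * σ))⁻¹ := (D_inv hσ2).symm
    have hpG : p ∈ G := mul_mem hhG (mul_mem (mul_mem hτG (inv_mem hhG)) hτG)
    exact ⟨p * (σ * p⁻¹ * σ),
      mul_mem hpG (mul_mem (mul_mem hσG (inv_mem hpG)) hσG),
      sds_conv (sds hσ2), sds_conv hτfτ, hf4⟩
  · -- Case (ii): σ = τ on an open set around z₀
    push_neg at hcase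
    obtain ⟨B, hB, hBz, hBσ⟩ := sep z₀ (σ z₀) (Ne.symm hz₀σ)
    have hOopen : IsOpen ((W ∩ {x | σ x ≠ x}) ∩ {x | τ x ≠ x}) :=
      (hWclopen.isOpen.inter (moved_isOpen sep σ)).inter (moved_isOpen sep τ)
    have hA₀open : IsOpen ((((W ∩ {x | σ x ≠ x}) ∩ {x | τ x ≠ x}) ∩ B) ∩ (⇑σ ⁻¹' Bᶜ)) :=
      (hOopen.inter hB.isOpen).inter (hB.compl.isOpen.preimage σ.continuous)
    have hz₀A : z₀ ∈ (((W ∩ {x | σ x ≠ x}) ∩ {x | τ x ≠ x}) ∩ B) ∩ (⇑σ ⁻¹' Bᶜ) :=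
      ⟨⟨⟨⟨hz₀W, hz₀σ⟩, hz₀τ⟩, hBz⟩, hBσ⟩
    obtain ⟨V, hVclopen, hzV, hVsub⟩ := basis z₀ _ hA₀open hz₀A
    have hagreeV : ∀ v ∈ V, σ v = τ v := by
      intro v hv
      obtain ⟨⟨⟨⟨hvW, hvσ⟩, hvτ⟩, _⟩, _⟩ := hVsub hv
      exact hcase v hvW hvσ hvτ
    have hσVnot : ∀ v ∈ V, σ v ∉ V := by
      intro v hv hσv
      exact (hVsub hv).2 (hVsub hσv).1.2
    obtain ⟨h, hhG, hmovedh, hh4⟩ := exists_pow4_supported hF2 hF4 sep hVclopen ⟨z₀, hzV⟩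
    have hf4 := D4_ne_one hσ2 hmovedh hσVnot hh4
    have hconj1 : τ * h * τ = σ * h * σ := conj_eq_conj hσ2 hτ2 hmovedh hagreeV
    have hmovedhinv : ∀ y, (h⁻¹ : X ≃ₜ X) y ≠ y → y ∈ V := fun y hy => hmovedh y (moved_inv hy)
    have hconj2 : τ * h⁻¹ * τ = σ * h⁻¹ * σ := conj_eq_conj hσ2 hτ2 hmovedhinv hagreeV
    have hτfτ : τ * (h * (σ * h⁻¹ * σ)) * τ = (h * (σ * h⁻¹ * σ))⁻¹ := by
      calc τ * (h * (σ * h⁻¹ * σ)) * τ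
          = (τ * h * τ) * (τ * (σ * h⁻¹ * σ) * τ) := conj_mul_conj hτ2
        _ = (σ * h * σ) * (σ * (τ * h⁻¹ * τ) * σ) := by rw [hconj1, conj_conj_comm hcomm]
        _ = (σ * h * σ) * (σ * (σ * h⁻¹ * σ) * σ) := by rw [hconj2]
        _ = (σ * h * σ) * h⁻¹ := by rw [conj_cancel hσ2]
        _ = (h * (σ * h⁻¹ * σ))⁻¹ := (D_inv hσ2).symm
    exact ⟨h * (σ * h⁻¹ * σ),
      mul_mem hhG (mul_mem (mul_mem hσG (inv_mem hhG)) hσG),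
      sds_conv (sds hσ2), sds_conv hτfτ, hf4⟩

/-- The algebraic characterisation of overlapping supports for involutions. -/
theorem overlap_iff_alg
    (hF1 : ∀ g ∈ G, g * g = 1 → IsClopen (homeoSupp g))
    (hF2 : ∀ U : Set X, IsClopen U → ∀ x ∈ U,
      ∃ g ∈ G, g ≠ 1 ∧ g * g = 1 ∧ x ∈ homeoSupp g ∧ homeoSupp g ⊆ U)
    (hF4 : ∀ U : Set X, U.Nonempty → IsClopen U → ∃ g ∈ G, homeoSupp g ⊆ U ∧ g * g ≠ 1)
    (sep : ∀ x y : X, x ≠ y → ∃ B : Set X, IsClopen B ∧ x ∈ B ∧ y ∉ B)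
    (basis : ∀ (x : X) (U : Set X), IsOpen U → x ∈ U → ∃ V, IsClopen V ∧ x ∈ V ∧ V ⊆ U)
    {σ τ : X ≃ₜ X} (hσG : σ ∈ G) (hτG : τ ∈ G) (hσ2 : σ * σ = 1) (hτ2 : τ * τ = 1) :
    (homeoSupp σ ∩ homeoSupp τ).Nonempty ↔
      (σ * τ ≠ τ * σ ∨
        ∃ f ∈ G, (σ * f) * (σ * f) = 1 ∧ (τ * f) * (τ * f) = 1 ∧ f * f * f * f ≠ 1) := by
  constructor
  · intro hover
    by_cases hc : σ * τ = τ * σ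
    · exact Or.inr (exists_alg_witness hF1 hF2 hF4 sep basis hσG hτG hσ2 hτ2 hc hover)
    · exact Or.inl hc
  · intro hyp
    by_contra hno
    have hdisj : ∀ x, σ x = x ∨ τ x = x := by
      intro x
      by_contra hcc
      push_neg at hcc
      exact hno ⟨x, mem_supp_of_moved hcc.1, mem_supp_of_moved hcc.2⟩
    rcases hyp with hne | ⟨f, _, hf1, hf2, hf4⟩
    · apply hne
      apply commute_of_moved_disjoint
      rintro x ⟨h1, h2⟩
      rcases hdisj x with h | h
      · exact h1 h
      · exact h2 h
    · exact hf4 (pow4_eq_one_of_disjoint hσ2 hτ2 hdisj hf1 hf2)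

end Construction
end CFP
namespace CFP
open Set

section Cantor

lemma bool_sep : ∀ x y : (ℕ → Bool), x ≠ y →
    ∃ B : Set (ℕ → Bool), IsClopen B ∧ x ∈ B ∧ y ∉ B := by
  intro x y hxy
  have hex : ∃ n, x n ≠ y n := by
    by_contra hc
    push_neg at hc
    exact hxy (funext hc)
  obtain ⟨n, hn⟩ := hex
  refine ⟨(fun z : ℕ → Bool => z n) ⁻¹' {x n},
    (isClopen_discrete {x n}).preimage (continuous_apply n), rfl, ?_⟩
  intro hmem
  rw [mem_preimage, mem_singleton_iff] at hmem
  exact hn hmem.symm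

lemma bool_basis : ∀ (x : ℕ → Bool) (U : Set (ℕ → Bool)), IsOpen U → x ∈ U →
    ∃ V, IsClopen V ∧ x ∈ V ∧ V ⊆ U := by
  intro x U hU hx
  rw [isOpen_pi_iff] at hU
  obtain ⟨I, u, h1, h2⟩ := hU x hx
  refine ⟨(I : Set ℕ).pi (fun a => {x a}), ⟨?_, ?_⟩, ?_, ?_⟩
  · exact isClosed_set_pi (fun a _ => isClosed_discrete _)
  · exact isOpen_set_pi I.finite_toSet (fun a _ => isOpen_discrete _)
  · intro a _
    rfl
  · intro z hz
    apply h2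
    intro a ha
    have hza : z a = x a := hz a ha
    rw [hza]
    exact (h1 a ha).2

variable {X : Type*} [TopologicalSpace X]

lemma cantor_sep (e : X ≃ₜ (ℕ → Bool)) :
    ∀ x y : X, x ≠ y → ∃ B : Set X, IsClopen B ∧ x ∈ B ∧ y ∉ B := by
  intro x y hxy
  obtain ⟨B, hB, hx, hy⟩ := bool_sep (e x) (e y) (fun hc => hxy (e.injective hc))
  exact ⟨⇑e ⁻¹' B, hB.preimage e.continuous, hx, hy⟩

lemma cantor_basis (e : X ≃ₜ (ℕ → Bool)) :
    ∀ (x : X) (U : Set X), IsOpen U → x ∈ U → ∃ V, IsClopen V ∧ x ∈ V ∧ V ⊆ U := by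
  intro x U hU hx
  have hU' : IsOpen (⇑e.symm ⁻¹' U) := hU.preimage e.symm.continuous
  have hx' : e x ∈ ⇑e.symm ⁻¹' U := by
    rw [mem_preimage, e.symm_apply_apply]
    exact hx
  obtain ⟨V, hV, hxV, hVsub⟩ := bool_basis (e x) _ hU' hx'
  refine ⟨⇑e ⁻¹' V, hV.preimage e.continuous, hxV, ?_⟩
  intro z hz
  have := hVsub hz
  rw [mem_preimage, e.symm_apply_apply] at this
  exact this

end Cantor
end CFP
namespace CFP
open Set

section Main

structure Facts (X : Type*) [TopologicalSpace X] (G : Subgroup (X ≃ₜ X)) : Prop where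
  hF1 : ∀ g ∈ G, g * g = 1 → IsClopen (homeoSupp g)
  hF2 : ∀ U : Set X, IsClopen U → ∀ x ∈ U,
      ∃ g ∈ G, g ≠ 1 ∧ g * g = 1 ∧ x ∈ homeoSupp g ∧ homeoSupp g ⊆ U
  hF4 : ∀ U : Set X, U.Nonempty → IsClopen U → ∃ g ∈ G, homeoSupp g ⊆ U ∧ g * g ≠ 1
  sep : ∀ x y : X, x ≠ y → ∃ B : Set X, IsClopen B ∧ x ∈ B ∧ y ∉ B
  basis : ∀ (x : X) (U : Set X), IsOpen U → x ∈ U → ∃ V, IsClopen V ∧ x ∈ V ∧ V ⊆ U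
  cpt : CompactSpace X

variable {X : Type*} [TopologicalSpace X] {G : Subgroup (X ≃ₜ X)}

lemma coe_invol {g : ↥G} (h : g * g = 1) : (g : X ≃ₜ X) * (g : X ≃ₜ X) = 1 := by
  have := congrArg (Subtype.val) h
  simpa using this

lemma coe_ne_one {g : ↥G} (h : g ≠ 1) : (g : X ≃ₜ X) ≠ 1 := by
  intro hc
  apply h
  apply Subtype.ext
  simpa using hc

end Main

section Transfer
variable {X₁ X₂ : Type*} [TopologicalSpace X₁] [TopologicalSpace X₂]
variable {G₁ : Subgroup (X₁ ≃ₜ X₁)} {G₂ : Subgroup (X₂ ≃ₜ X₂)}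

lemma invol_map (α : ↥G₁ ≃* ↥G₂) {g : ↥G₁} (h : g * g = 1) : α g * α g = 1 := by
  rw [← map_mul, h, map_one]

lemma witness_transfer (α : ↥G₁ ≃* ↥G₂) {a b : ↥G₁}
    (h : ∃ f ∈ G₁, ((a : X₁ ≃ₜ X₁) * f) * ((a : X₁ ≃ₜ X₁) * f) = 1 ∧
        ((b : X₁ ≃ₜ X₁) * f) * ((b : X₁ ≃ₜ X₁) * f) = 1 ∧ f * f * f * f ≠ 1) :
    ∃ f ∈ G₂, ((↑(α a) : X₂ ≃ₜ X₂) * f) * ((↑(α a) : X₂ ≃ₜ X₂) * f) = 1 ∧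
        ((↑(α b) : X₂ ≃ₜ X₂) * f) * ((↑(α b) : X₂ ≃ₜ X₂) * f) = 1 ∧ f * f * f * f ≠ 1 := by
  obtain ⟨f, hfG, e1, e2, e4⟩ := h
  set fs : ↥G₁ := ⟨f, hfG⟩ with hfs
  have E1 : (a * fs) * (a * fs) = 1 := Subtype.ext (by simpa using e1)
  have E2 : (b * fs) * (b * fs) = 1 := Subtype.ext (by simpa using e2)
  have hα1 : (α a * α fs) * (α a * α fs) = 1 := by
    rw [← map_mul, ← map_mul, E1, map_one]
  have hα2 : (α b * α fs) * (α b * α fs) = 1 := by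
    rw [← map_mul, ← map_mul, E2, map_one]
  refine ⟨↑(α fs), (α fs).2, ?_, ?_, ?_⟩
  · have := congrArg (Subtype.val) hα1
    simpa using this
  · have := congrArg (Subtype.val) hα2
    simpa using this
  · intro hc
    apply e4
    have hc' : α fs * α fs * α fs * α fs = 1 := Subtype.ext (by simpa using hc)
    have : α (fs * fs * fs * fs) = α 1 := by
      rw [map_mul, map_mul, map_mul, map_one]
      exact hc'
    have h1 : fs * fs * fs * fs = 1 := α.injective this
    have := congrArg (Subtype.val) h1
    simpa using this

lemma overlap_transfer (hQ₁ : Facts X₁ G₁) (hQ₂ : Facts X₂ G₂) (α : ↥G₁ ≃* ↥G₂)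
    (a b : ↥G₁) (ha : a * a = 1) (hb : b * b = 1) :
    (homeoSupp (a : X₁ ≃ₜ X₁) ∩ homeoSupp (b : X₁ ≃ₜ X₁)).Nonempty ↔
    (homeoSupp (↑(α a) : X₂ ≃ₜ X₂) ∩ homeoSupp (↑(α b) : X₂ ≃ₜ X₂)).Nonempty := by
  rw [overlap_iff_alg hQ₁.hF1 hQ₁.hF2 hQ₁.hF4 hQ₁.sep hQ₁.basis a.2 b.2
      (coe_invol ha) (coe_invol hb),
    overlap_iff_alg hQ₂.hF1 hQ₂.hF2 hQ₂.hF4 hQ₂.sep hQ₂.basis (α a).2 (α b).2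
      (coe_invol (invol_map α ha)) (coe_invol (invol_map α hb))]
  constructor
  · rintro (hne | hw)
    · left
      intro hc
      apply hne
      have h1 : α a * α b = α b * α a := Subtype.ext (by simpa using hc)
      have h2 : a * b = b * a := by
        apply α.injective
        rw [map_mul, map_mul, h1]
      have := congrArg Subtype.val h2
      simpa using this
    · exact Or.inr (witness_transfer α hw)
  · rintro (hne | hw)
    · left
      intro hc
      apply hne
      have h1 : a * b = b * a := Subtype.ext (by simpa using hc)
      have h2 : α a * α b = α b * α a := by rw [← map_mul, ← map_mul, h1]
      have := congrArg Subtype.val h2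
      simpa using this
    · right
      have := witness_transfer α.symm hw
      rw [α.symm_apply_apply, α.symm_apply_apply] at this
      exact this

lemma subset_transfer (hQ₁ : Facts X₁ G₁) (hQ₂ : Facts X₂ G₂) (α : ↥G₁ ≃* ↥G₂)
    (a b : ↥G₁) (ha : a * a = 1) (hb : b * b = 1)
    (h : homeoSupp (a : X₁ ≃ₜ X₁) ⊆ homeoSupp (b : X₁ ≃ₜ X₁)) :
    homeoSupp (↑(α a) : X₂ ≃ₜ X₂) ⊆ homeoSupp (↑(α b) : X₂ ≃ₜ X₂) := by
  by_contra hc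
  rw [not_subset] at hc
  obtain ⟨y, hy1, hy2⟩ := hc
  have hclopen : IsClopen (homeoSupp (↑(α a) : X₂ ≃ₜ X₂) ∩
      (homeoSupp (↑(α b) : X₂ ≃ₜ X₂))ᶜ) :=
    (hQ₂.hF1 _ (α a).2 (coe_invol (invol_map α ha))).inter
      (hQ₂.hF1 _ (α b).2 (coe_invol (invol_map α hb))).compl
  obtain ⟨k, hkG, hk1, hk2, hyk, hkC⟩ := hQ₂.hF2 _ hclopen y ⟨hy1, hy2⟩
  set ks : ↥G₂ := ⟨k, hkG⟩ with hks
  set g₀ : ↥G₁ := α.symm ks with hg₀def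
  have hks2 : ks * ks = 1 := Subtype.ext (by simpa using hk2)
  have hg₀2 : g₀ * g₀ = 1 := by
    rw [hg₀def, ← map_mul, hks2, map_one]
  have hαg₀ : α g₀ = ks := α.apply_symm_apply ks
  have hov : (homeoSupp (↑(α g₀) : X₂ ≃ₜ X₂) ∩ homeoSupp (↑(α a) : X₂ ≃ₜ X₂)).Nonempty := by
    rw [hαg₀]
    obtain ⟨w, hw⟩ := supp_nonempty_of_ne_one hk1
    exact ⟨w, hw, (hkC hw).1⟩
  have hov1 : (homeoSupp (g₀ : X₁ ≃ₜ X₁) ∩ homeoSupp (a : X₁ ≃ₜ X₁)).Nonempty :=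
    (overlap_transfer hQ₁ hQ₂ α g₀ a hg₀2 ha).mpr hov
  have hdis : ¬ (homeoSupp (↑(α g₀) : X₂ ≃ₜ X₂) ∩ homeoSupp (↑(α b) : X₂ ≃ₜ X₂)).Nonempty := by
    rw [hαg₀]
    rintro ⟨w, hw1, hw2⟩
    exact (hkC hw1).2 hw2
  have hdis1 : ¬ (homeoSupp (g₀ : X₁ ≃ₜ X₁) ∩ homeoSupp (b : X₁ ≃ₜ X₁)).Nonempty :=
    fun hcc => hdis ((overlap_transfer hQ₁ hQ₂ α g₀ b hg₀2 hb).mp hcc)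
  obtain ⟨w, hw1, hw2⟩ := hov1
  exact hdis1 ⟨w, hw1, h hw2⟩

end Transfer
end CFP
namespace CFP
open Set

section Core
variable {X₁ X₂ : Type*} [TopologicalSpace X₁] [TopologicalSpace X₂]
variable {G₁ : Subgroup (X₁ ≃ₜ X₁)} {G₂ : Subgroup (X₂ ≃ₜ X₂)}

theorem spatial_core (hQ₁ : Facts X₁ G₁) (hQ₂ : Facts X₂ G₂) (α : ↥G₁ ≃* ↥G₂) :
    ∃ hfun : X₁ → X₂,
      (∀ x : X₁, (⋂ g ∈ {g : ↥G₁ | x ∈ homeoSupp (↑g : X₁ ≃ₜ X₁) ∧ g * g = 1},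
          homeoSupp (↑(α g) : X₂ ≃ₜ X₂)) = {hfun x}) ∧
      Continuous hfun ∧
      ∀ (g : ↥G₁) (x : X₁), (↑(α g) : X₂ ≃ₜ X₂) (hfun x) = hfun ((↑g : X₁ ≃ₜ X₁) x) := by
  classical
  haveI : CompactSpace X₂ := hQ₂.cpt
  set T : X₁ → Set ↥G₁ :=
    fun x => {g : ↥G₁ | x ∈ homeoSupp (↑g : X₁ ≃ₜ X₁) ∧ g * g = 1} with hT
  have hTmem : ∀ (x : X₁) (U : Set X₁), IsClopen U → x ∈ U →
      ∃ g : ↥G₁, g ∈ T x ∧ homeoSupp (↑g : X₁ ≃ₜ X₁) ⊆ U := by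
    intro x U hU hx
    obtain ⟨g, hgG, _, hg2, hxg, hgU⟩ := hQ₁.hF2 U hU x hx
    exact ⟨⟨g, hgG⟩, ⟨hxg, Subtype.ext (by simpa using hg2)⟩, hgU⟩
  have hTne1 : ∀ {x : X₁} {g : ↥G₁}, g ∈ T x → g ≠ 1 := by
    intro x g hg hc
    have hcoe : (↑g : X₁ ≃ₜ X₁) = 1 := by rw [hc]; rfl
    have h0 : x ∈ homeoSupp (1 : X₁ ≃ₜ X₁) := hcoe ▸ hg.1
    have hem : ({x : X₁ | (1 : X₁ ≃ₜ X₁) x ≠ x}) = (∅ : Set X₁) := by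
      ext z; simp
    rw [homeoSupp, hem, closure_empty] at h0
    exact h0
  have hclo₂ : ∀ g : ↥G₁, g * g = 1 → IsClopen (homeoSupp (↑(α g) : X₂ ≃ₜ X₂)) :=
    fun g hg => hQ₂.hF1 _ (α g).2 (coe_invol (invol_map α hg))
  have hne₂ : ∀ {x : X₁} {g : ↥G₁}, g ∈ T x → (homeoSupp (↑(α g) : X₂ ≃ₜ X₂)).Nonempty := by
    intro x g hg
    apply supp_nonempty_of_ne_one
    apply coe_ne_one
    intro hc
    exact hTne1 hg (by apply α.injective; rw [hc, map_one])
  have hsing : ∀ x : X₁, ∃ y : X₂,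
      (⋂ g ∈ T x, homeoSupp (↑(α g) : X₂ ≃ₜ X₂)) = {y} := by
    intro x
    have hTx : ∃ g : ↥G₁, g ∈ T x := by
      obtain ⟨g, hg, _⟩ := hTmem x univ isClopen_univ (mem_univ x)
      exact ⟨g, hg⟩
    haveI : Nonempty (T x) := ⟨⟨hTx.choose, hTx.choose_spec⟩⟩
    have hne : (⋂ g : T x, homeoSupp (↑(α g.1) : X₂ ≃ₜ X₂)).Nonempty := by
      apply IsCompact.nonempty_iInter_of_directed_nonempty_isCompact_isClosed
      · rintro ⟨i, hi⟩ ⟨j, hj⟩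
        have hij : IsClopen (homeoSupp (↑i : X₁ ≃ₜ X₁) ∩ homeoSupp (↑j : X₁ ≃ₜ X₁)) :=
          (hQ₁.hF1 _ i.2 (coe_invol hi.2)).inter (hQ₁.hF1 _ j.2 (coe_invol hj.2))
        obtain ⟨k, hk, hksub⟩ := hTmem x _ hij ⟨hi.1, hj.1⟩
        refine ⟨⟨k, hk⟩, ?_, ?_⟩
        · exact subset_transfer hQ₁ hQ₂ α k i hk.2 hi.2 (fun w hw => (hksub hw).1)
        · exact subset_transfer hQ₁ hQ₂ α k j hk.2 hj.2 (fun w hw => (hksub hw).2)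
      · exact fun i => hne₂ i.2
      · exact fun i => (hclo₂ i.1 i.2.2).isClosed.isCompact
      · exact fun i => (hclo₂ i.1 i.2.2).isClosed
    have hne' : (⋂ g ∈ T x, homeoSupp (↑(α g) : X₂ ≃ₜ X₂)).Nonempty := by
      rw [biInter_eq_iInter]
      exact hne
    obtain ⟨y, hy⟩ := hne'
    have hymem : ∀ g ∈ T x, y ∈ homeoSupp (↑(α g) : X₂ ≃ₜ X₂) := fun g hg =>
      mem_iInter₂.mp hy g hg
    refine ⟨y, Subset.antisymm ?_ ?_⟩
    · intro y' hy'
      have hy'mem : ∀ g ∈ T x, y' ∈ homeoSupp (↑(α g) : X₂ ≃ₜ X₂) := fun g hg =>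
        mem_iInter₂.mp hy' g hg
      rw [mem_singleton_iff]
      by_contra hyy
      obtain ⟨B, hB, hy'B, hyB⟩ := hQ₂.sep y' y hyy
      obtain ⟨k, hkG, hk1, hk2, hy'k, hkB⟩ := hQ₂.hF2 B hB y' hy'B
      set ks : ↥G₂ := ⟨k, hkG⟩ with hks
      set g := α.symm ks with hgdef
      have hks2 : ks * ks = 1 := Subtype.ext (by simpa using hk2)
      have hg2 : g * g = 1 := by rw [hgdef, ← map_mul, hks2, map_one]
      have hαg : α g = ks := α.apply_symm_apply ks
      by_cases hx : x ∈ homeoSupp (↑g : X₁ ≃ₜ X₁)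
      · have hgT : g ∈ T x := ⟨hx, hg2⟩
        have hyin : y ∈ homeoSupp (↑(α g) : X₂ ≃ₜ X₂) := hymem g hgT
        rw [hαg] at hyin
        exact hyB (hkB hyin)
      · have hcl : IsClopen ((homeoSupp (↑g : X₁ ≃ₜ X₁))ᶜ) :=
          (hQ₁.hF1 _ g.2 (coe_invol hg2)).compl
        obtain ⟨g₀, hg₀T, hg₀sub⟩ := hTmem x _ hcl hx
        have hdis1 : ¬ (homeoSupp (↑g₀ : X₁ ≃ₜ X₁) ∩ homeoSupp (↑g : X₁ ≃ₜ X₁)).Nonempty := by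
          rintro ⟨w, hw1, hw2⟩
          exact (hg₀sub hw1) hw2
        apply hdis1
        apply (overlap_transfer hQ₁ hQ₂ α g₀ g hg₀T.2 hg2).mpr
        refine ⟨y', hy'mem g₀ hg₀T, ?_⟩
        rw [hαg]
        exact hy'k
    · intro y'' hy''
      rw [mem_singleton_iff] at hy''
      subst hy''
      exact mem_iInter₂.mpr hymem
  choose hfun hP using hsing
  have hsubP : ∀ (x : X₁) (g : ↥G₁), g ∈ T x →
      hfun x ∈ homeoSupp (↑(α g) : X₂ ≃ₜ X₂) := by
    intro x g hg
    have hmem : hfun x ∈ ⋂ g ∈ T x, homeoSupp (↑(α g) : X₂ ≃ₜ X₂) := by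
      rw [hP x]
      exact rfl
    exact mem_iInter₂.mp hmem g hg
  have hcont : Continuous hfun := by
    apply continuous_iff_continuousAt.mpr
    intro x
    rw [ContinuousAt, Filter.tendsto_def]
    intro s hs
    obtain ⟨W, hWs, hWopen, hWmem⟩ := mem_nhds_iff.mp hs
    have hint : ((Wᶜ : Set X₂) ∩ ⋂ i : T x, homeoSupp (↑(α i.1) : X₂ ≃ₜ X₂)) = ∅ := by
      have hPx := hP x
      rw [biInter_eq_iInter] at hPx
      rw [hPx]
      ext z
      simp only [mem_inter_iff, mem_compl_iff, mem_singleton_iff, mem_empty_iff_false,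
        iff_false, not_and]
      rintro hz rfl
      exact hz hWmem
    have hWcpt : IsCompact (Wᶜ : Set X₂) := hWopen.isClosed_compl.isCompact
    obtain ⟨t, ht⟩ := hWcpt.elim_finite_subfamily_closed _
      (fun i : T x => (hclo₂ i.1 i.2.2).isClosed) hint
    set U' : Set X₁ := ⋂ i ∈ t, homeoSupp (↑(i : ↥(T x)).1 : X₁ ≃ₜ X₁) with hU'
    have hU'clopen : IsClopen U' :=
      isClopen_biInter_finset (fun i _ => hQ₁.hF1 _ i.1.2 (coe_invol i.2.2))
    have hxU' : x ∈ U' := mem_iInter₂.mpr (fun i _ => i.2.1)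
    obtain ⟨gs, hgsT, hgssub⟩ := hTmem x U' hU'clopen hxU'
    rw [mem_nhds_iff]
    refine ⟨homeoSupp (↑gs : X₁ ≃ₜ X₁), ?_,
      (hQ₁.hF1 _ gs.2 (coe_invol hgsT.2)).isOpen, hgsT.1⟩
    intro x' hx'
    have h1 : hfun x' ∈ homeoSupp (↑(α gs) : X₂ ≃ₜ X₂) := hsubP x' gs ⟨hx', hgsT.2⟩
    have h2 : ∀ i : ↥(T x), i ∈ t → hfun x' ∈ homeoSupp (↑(α i.1) : X₂ ≃ₜ X₂) := by
      intro i hi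
      apply subset_transfer hQ₁ hQ₂ α gs i.1 hgsT.2 i.2.2
        (fun w hw => mem_iInter₂.mp (hgssub hw) i hi)
      exact h1
    have h3 : hfun x' ∉ (Wᶜ : Set X₂) := by
      intro hmem
      have hzin : hfun x' ∈ (Wᶜ : Set X₂) ∩ ⋂ i ∈ t, homeoSupp (↑(α (i : ↥(T x)).1) : X₂ ≃ₜ X₂) :=
        ⟨hmem, mem_iInter₂.mpr h2⟩
      rw [ht] at hzin
      exact hzin
    exact hWs (not_not.mp h3)
  have hequi : ∀ (g : ↥G₁) (x : X₁),
      (↑(α g) : X₂ ≃ₜ X₂) (hfun x) = hfun ((↑g : X₁ ≃ₜ X₁) x) := by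
    intro g x
    have hmem : (↑(α g) : X₂ ≃ₜ X₂) (hfun x) ∈
        ⋂ u ∈ T ((↑g : X₁ ≃ₜ X₁) x), homeoSupp (↑(α u) : X₂ ≃ₜ X₂) := by
      rw [mem_iInter₂]
      intro u hu
      set s : ↥G₁ := g⁻¹ * u * g with hs
      have hscoe : (↑s : X₁ ≃ₜ X₁) =
          ((↑g : X₁ ≃ₜ X₁))⁻¹ * (↑u : X₁ ≃ₜ X₁) * (((↑g : X₁ ≃ₜ X₁))⁻¹)⁻¹ := by
        rw [inv_inv, hs]
        simp
      have hsupp_s : homeoSupp (↑s : X₁ ≃ₜ X₁) =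
          ⇑(((↑g : X₁ ≃ₜ X₁))⁻¹) '' homeoSupp (↑u : X₁ ≃ₜ X₁) := by
        rw [hscoe, supp_conj]
      have hsT : s ∈ T x := by
        constructor
        · rw [hsupp_s]
          refine ⟨(↑g : X₁ ≃ₜ X₁) x, hu.1, ?_⟩
          exact (↑g : X₁ ≃ₜ X₁).symm_apply_apply x
        · have he : s * s = g⁻¹ * (u * u) * g := by rw [hs]; group
          rw [he, hu.2]
          group
      have hmem1 : hfun x ∈ homeoSupp (↑(α s) : X₂ ≃ₜ X₂) := hsubP x s hsT
      have hαscoe : (↑(α s) : X₂ ≃ₜ X₂) =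
          ((↑(α g) : X₂ ≃ₜ X₂))⁻¹ * (↑(α u) : X₂ ≃ₜ X₂) * (((↑(α g) : X₂ ≃ₜ X₂))⁻¹)⁻¹ := by
        rw [inv_inv, hs, map_mul, map_mul, map_inv]
        simp
      rw [hαscoe, supp_conj] at hmem1
      obtain ⟨w, hw, hwe⟩ := hmem1
      have hwe' : (↑(α g) : X₂ ≃ₜ X₂) (hfun x) = w := by
        rw [← hwe]
        exact (↑(α g) : X₂ ≃ₜ X₂).apply_symm_apply w
      rw [hwe']
      exact hw
    rw [hP ((↑g : X₁ ≃ₜ X₁) x)] at hmem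
    exact hmem
  exact ⟨hfun, hP, hcont, hequi⟩

end Core
end CFP
/-- Matui. An isomorphism between class-F groups of homeomorphisms of
Cantor spaces is spatial, implemented by `x ↦` the unique point of
`P(x) = ⋂_{g ∈ T(x)} supp(α g)` with `T(x) = {g : x ∈ supp g, g² = 1}`. -/
theorem classF_spatial_realization {X₁ X₂ : Type*} [TopologicalSpace X₁] [TopologicalSpace X₂]
    (hX₁ : IsCantorSpace X₁) (hX₂ : IsCantorSpace X₂)
    (G₁ : Subgroup (X₁ ≃ₜ X₁)) (G₂ : Subgroup (X₂ ≃ₜ X₂))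
    (hF₁ : IsClassF G₁) (hF₂ : IsClassF G₂) (α : ↥G₁ ≃* ↥G₂) :
    ∃ h : X₁ ≃ₜ X₂,
      (∀ x : X₁, (⋂ g ∈ {g : ↥G₁ | x ∈ homeoSupp (↑g : X₁ ≃ₜ X₁) ∧ g * g = 1},
          homeoSupp (↑(α g) : X₂ ≃ₜ X₂)) = {h x}) ∧
      ∀ (g : ↥G₁) (x : X₁), (↑(α g) : X₂ ≃ₜ X₂) (h x) = h ((↑g : X₁ ≃ₜ X₁) x) := by
  obtain ⟨e₁⟩ := hX₁
  obtain ⟨e₂⟩ := hX₂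
  haveI hc1 : CompactSpace X₁ := e₁.symm.compactSpace
  haveI hc2 : CompactSpace X₂ := e₂.symm.compactSpace
  have hQ₁ : CFP.Facts X₁ G₁ :=
    ⟨hF₁.1, hF₁.2.1, hF₁.2.2.2, CFP.cantor_sep e₁, CFP.cantor_basis e₁, inferInstance⟩
  have hQ₂ : CFP.Facts X₂ G₂ :=
    ⟨hF₂.1, hF₂.2.1, hF₂.2.2.2, CFP.cantor_sep e₂, CFP.cantor_basis e₂, inferInstance⟩
  obtain ⟨h1, hP1, hcont1, hequi1⟩ := CFP.spatial_core hQ₁ hQ₂ α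
  obtain ⟨h2, hP2, hcont2, _⟩ := CFP.spatial_core hQ₂ hQ₁ α.symm
  have hmemP1 : ∀ (x : X₁) (g : ↥G₁), x ∈ homeoSupp (↑g : X₁ ≃ₜ X₁) → g * g = 1 →
      h1 x ∈ homeoSupp (↑(α g) : X₂ ≃ₜ X₂) := by
    intro x g hx hg
    have hmem : h1 x ∈ ⋂ g ∈ {g : ↥G₁ | x ∈ homeoSupp (↑g : X₁ ≃ₜ X₁) ∧ g * g = 1},
        homeoSupp (↑(α g) : X₂ ≃ₜ X₂) := by
      rw [hP1 x]
      exact Set.mem_singleton _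
    exact Set.mem_iInter₂.mp hmem g ⟨hx, hg⟩
  have hmemP2 : ∀ (y : X₂) (k : ↥G₂), y ∈ homeoSupp (↑k : X₂ ≃ₜ X₂) → k * k = 1 →
      h2 y ∈ homeoSupp (↑(α.symm k) : X₁ ≃ₜ X₁) := by
    intro y k hy hk
    have hmem : h2 y ∈ ⋂ k ∈ {k : ↥G₂ | y ∈ homeoSupp (↑k : X₂ ≃ₜ X₂) ∧ k * k = 1},
        homeoSupp (↑(α.symm k) : X₁ ≃ₜ X₁) := by
      rw [hP2 y]
      exact Set.mem_singleton _
    exact Set.mem_iInter₂.mp hmem k ⟨hy, hk⟩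
  have hleft : ∀ x, h2 (h1 x) = x := by
    intro x
    have hx : x ∈ ⋂ k ∈ {k : ↥G₂ | h1 x ∈ homeoSupp (↑k : X₂ ≃ₜ X₂) ∧ k * k = 1},
        homeoSupp (↑(α.symm k) : X₁ ≃ₜ X₁) := by
      rw [Set.mem_iInter₂]
      rintro k ⟨hk1, hk2⟩
      by_contra hnot
      have hsymm2 : α.symm k * α.symm k = 1 := CFP.invol_map α.symm hk2
      have hcl : IsClopen ((homeoSupp (↑(α.symm k) : X₁ ≃ₜ X₁))ᶜ) :=
        (hQ₁.hF1 _ (α.symm k).2 (CFP.coe_invol hsymm2)).compl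
      obtain ⟨g, hgG, hg1, hg2, hxg, hgsub⟩ := hQ₁.hF2 _ hcl x hnot
      have hgs2 : (⟨g, hgG⟩ : ↥G₁) * ⟨g, hgG⟩ = 1 := Subtype.ext (by simpa using hg2)
      have hdis : ¬ (homeoSupp ((⟨g, hgG⟩ : ↥G₁) : X₁ ≃ₜ X₁) ∩
          homeoSupp (↑(α.symm k) : X₁ ≃ₜ X₁)).Nonempty := by
        rintro ⟨w, hw1, hw2⟩
        exact (hgsub hw1) hw2
      apply hdis
      apply (CFP.overlap_transfer hQ₁ hQ₂ α ⟨g, hgG⟩ (α.symm k) hgs2 hsymm2).mpr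
      rw [α.apply_symm_apply]
      exact ⟨h1 x, hmemP1 x ⟨g, hgG⟩ hxg hgs2, hk1⟩
    rw [hP2 (h1 x)] at hx
    exact (Set.mem_singleton_iff.mp hx).symm
  have hright : ∀ y, h1 (h2 y) = y := by
    intro y
    have hy : y ∈ ⋂ g ∈ {g : ↥G₁ | h2 y ∈ homeoSupp (↑g : X₁ ≃ₜ X₁) ∧ g * g = 1},
        homeoSupp (↑(α g) : X₂ ≃ₜ X₂) := by
      rw [Set.mem_iInter₂]
      rintro g ⟨hg1, hg2⟩
      by_contra hnot
      have hcl : IsClopen ((homeoSupp (↑(α g) : X₂ ≃ₜ X₂))ᶜ) :=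
        (hQ₂.hF1 _ (α g).2 (CFP.coe_invol (CFP.invol_map α hg2))).compl
      obtain ⟨k, hkG, hk1, hk2, hyk, hksub⟩ := hQ₂.hF2 _ hcl y hnot
      have hks2 : (⟨k, hkG⟩ : ↥G₂) * ⟨k, hkG⟩ = 1 := Subtype.ext (by simpa using hk2)
      have hdis : ¬ (homeoSupp ((⟨k, hkG⟩ : ↥G₂) : X₂ ≃ₜ X₂) ∩
          homeoSupp (↑(α g) : X₂ ≃ₜ X₂)).Nonempty := by
        rintro ⟨w, hw1, hw2⟩
        exact (hksub hw1) hw2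
      apply hdis
      apply (CFP.overlap_transfer hQ₂ hQ₁ α.symm ⟨k, hkG⟩ (α g) hks2
        (CFP.invol_map α hg2)).mpr
      refine ⟨h2 y, hmemP2 y ⟨k, hkG⟩ hyk hks2, ?_⟩
      rw [α.symm_apply_apply]
      exact hg1
    rw [hP1 (h2 y)] at hy
    exact (Set.mem_singleton_iff.mp hy).symm
  refine ⟨⟨⟨h1, h2, hleft, hright⟩, hcont1, hcont2⟩, ?_, ?_⟩
  · intro x
    exact hP1 x
  · intro g x
    exact hequi1 g x
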